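/- Twins in ε-regular binary words: if S is an ε-regular binary word of length m (with 1/ε a positive integer dividing appropriately, 0 < ε ≤ 1/5), then S contains two disjoint identical scattered subwords whose total length is at least m − 5εm, i.e., 2f(S) ≥ (1 − 5ε)m. -/

import Mathlib

/-- The scattered subword of `S` indexed by the set `I`, taken in increasing order. -/
def extract {α : Type*} (S : List α) (I : Finset ℕ) : List α :=
  (I.sort (· ≤ ·)).filterMap (fun i => S[i]?)

/-- `S` has two disjoint identical scattered subwords of length `ℓ`. -/
def HasTwins {α : Type*} (S : List α) (ℓ : ℕ) : Prop :=
  ∃ I J : Finset ℕ, I ⊆ Finset.range S.length ∧ J ⊆ Finset.range S.length ∧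
    Disjoint I J ∧ I.card = ℓ ∧ J.card = ℓ ∧ extract S I = extract S J

/-- Density of the letter `q` in a word `T` (0 if `T` is empty). -/
noncomputable def density {α : Type*} [DecidableEq α] (q : α) (T : List α) : ℝ :=
  (T.count q : ℝ) / (T.length : ℝ)

/-- `S` is `ε`-regular (with `b = ε·|S|` a positive integer). -/
def EpsRegular {α : Type*} [DecidableEq α] (S : List α) (ε : ℝ) (b : ℕ) : Prop :=
  ∀ q : α, ∀ i : ℕ, b ≤ i → i + 2 * b ≤ S.length →
    |density q S - density q ((S.drop i).take b)| < ε

lemma filterMap_const_some {α β : Type*} (f : α → Option β) (q : β) :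
    ∀ (l : List α), (∀ x ∈ l, f x = some q) → l.filterMap f = List.replicate l.length q := by
  intro l
  induction l with
  | nil => simp
  | cons a l ih =>
    intro h
    rw [List.filterMap_cons, h a (by simp), List.length_cons, List.replicate_succ,
      ih (fun x hx => h x (by simp [hx]))]

lemma extract_const {α : Type*} (S : List α) (P : Finset ℕ) (q : α)
    (h : ∀ i ∈ P, S[i]? = some q) : extract S P = List.replicate P.card q := by
  rw [extract, filterMap_const_some _ q _ (fun x hx => h x (by
    rwa [← Finset.mem_sort (α := ℕ) (· ≤ ·)])), Finset.length_sort]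

lemma sort_union {I J : Finset ℕ} (h : ∀ i ∈ I, ∀ j ∈ J, i < j) :
    (I ∪ J).sort (· ≤ ·) = I.sort (· ≤ ·) ++ J.sort (· ≤ ·) := by
  have hd : Disjoint I J := by
    rw [Finset.disjoint_left]
    intro a haI haJ
    exact absurd rfl (h a haI a haJ).ne
  have hperm : ((I ∪ J).sort (· ≤ ·)).Perm (I.sort (· ≤ ·) ++ J.sort (· ≤ ·)) := by
    rw [← Multiset.coe_eq_coe]
    have h2 : ((I.sort (· ≤ ·) ++ J.sort (· ≤ ·) : List ℕ) : Multiset ℕ)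
        = ((I.sort (· ≤ ·) : List ℕ) : Multiset ℕ) + ((J.sort (· ≤ ·) : List ℕ) : Multiset ℕ) := rfl
    rw [h2, Finset.sort_eq, Finset.sort_eq, Finset.sort_eq, ← Finset.disjUnion_eq_union I J hd]
    rfl
  refine List.Perm.eq_of_pairwise' (Finset.pairwise_sort _ _) ?_ hperm
  rw [List.pairwise_append]
  refine ⟨Finset.pairwise_sort _ _, Finset.pairwise_sort _ _, fun a ha b hb => ?_⟩
  exact (h a (by rwa [← Finset.mem_sort (α := ℕ) (· ≤ ·)])
    b (by rwa [← Finset.mem_sort (α := ℕ) (· ≤ ·)])).le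

lemma extract_union {α : Type*} (S : List α) {I J : Finset ℕ} (h : ∀ i ∈ I, ∀ j ∈ J, i < j) :
    extract S (I ∪ J) = extract S I ++ extract S J := by
  rw [extract, sort_union h, List.filterMap_append]; rfl

lemma card_filter_eq_count {α : Type*} [DecidableEq α] (S : List α) (q : α) (lo : ℕ) :
    ∀ len : ℕ, lo + len ≤ S.length →
    ((Finset.Ico lo (lo+len)).filter (fun i => S[i]? = some q)).card
      = ((S.drop lo).take len).count q := by
  intro len
  induction len with
  | zero => simp
  | succ n ih =>
    intro h
    have h' : lo + n ≤ S.length := by omega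
    have hget : (S.drop lo)[n]? = S[lo+n]? := by rw [List.getElem?_drop]
    have hlt : lo + n < S.length := by omega
    obtain ⟨v, hv⟩ : ∃ v, S[lo+n]? = some v := ⟨S[lo+n], List.getElem?_eq_getElem hlt⟩
    rw [List.take_succ, List.count_append, ← ih h', hget, hv]
    have he : lo + (n+1) = (lo + n) + 1 := by omega
    rw [he, Nat.Ico_succ_right_eq_insert_Ico (by omega), Finset.filter_insert]
    by_cases hq : v = q
    · subst hq
      rw [if_pos hv, Finset.card_insert_of_notMem (by simp)]
      simp
    · rw [if_neg (by simp [hv, hq])]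
      simp [List.count_singleton, hq]

/-- Twins in `ε`-regular binary words: an `ε`-regular binary word of length `m = t·b`
(where `ε = 1/t`, `t ≥ 5`) has two disjoint identical scattered subwords of total
length at least `(1 - 5ε)·m`. -/
theorem twins_in_regular (t b : ℕ) (ht : 5 ≤ t) (hb : 1 ≤ b) (ε : ℝ)
    (hε : ε = 1 / (t : ℝ)) (S : List (Fin 2)) (hS : S.length = t * b)
    (hreg : EpsRegular S ε b) :
    ∃ ℓ : ℕ, HasTwins S ℓ ∧ (1 - 5 * ε) * (S.length : ℝ) ≤ 2 * (ℓ : ℝ) := by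
  classical
  -- majority letter
  obtain ⟨c, c', hcc', hmaj, hall⟩ : ∃ c c' : Fin 2, c ≠ c' ∧ S.count c' ≤ S.count c ∧
      ∀ v : Fin 2, v = c ∨ v = c' := by
    rcases le_total (S.count 0) (S.count 1) with h | h
    · exact ⟨1, 0, by decide, h, by decide⟩
    · exact ⟨0, 1, by decide, h, by decide⟩
  set lett : ℕ → Fin 2 := fun k => if Even k then c else c' with hlett
  set Pos : Fin 2 → ℕ → Finset ℕ :=
    fun q j => (Finset.Ico (j*b) (j*b+b)).filter (fun i => S[i]? = some q) with hPos
  set A : Fin 2 → ℕ → ℕ := fun q j => (Pos q j).card with hA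
  set n : ℕ := t - 3 with hn
  set x : ℕ → ℕ := fun k => min (A (lett k) (k+1)) (A (lett k) (k+2)) with hx
  have memPos : ∀ q j i, i ∈ Pos q j → j*b ≤ i ∧ i < j*b + b ∧ S[i]? = some q := by
    intro q j i hi
    rw [hPos, Finset.mem_filter, Finset.mem_Ico] at hi
    exact ⟨hi.1.1, hi.1.2, hi.2⟩
  -- block partition
  have hAB : ∀ j, j + 1 ≤ t → A c j + A c' j = b := by
    intro j hj
    have hjb : j*b + b ≤ S.length := by
      rw [hS]
      calc j*b + b = (j+1)*b := by ring
      _ ≤ t*b := Nat.mul_le_mul_right b hj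
    have hfc : Pos c' j = (Finset.Ico (j*b) (j*b+b)).filter (fun i => ¬ (S[i]? = some c)) := by
      rw [hPos]
      apply Finset.filter_congr
      intro i hi
      have hi' : i < S.length := lt_of_lt_of_le (Finset.mem_Ico.mp hi).2 hjb
      have hgi : S[i]? = some S[i] := List.getElem?_eq_getElem hi'
      rw [hgi]
      simp only [Option.some_inj]
      rcases hall S[i] with h | h <;> rw [h] <;> simp [hcc', Ne.symm hcc']
    have hsplit := Finset.card_filter_add_card_filter_not
      (s := Finset.Ico (j*b) (j*b+b)) (p := fun i => S[i]? = some c)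
    rw [hA]
    simp only []
    rw [hfc]
    rw [Nat.card_Ico] at hsplit
    convert hsplit using 2
    omega
  -- global letter counts
  have count_pair : ∀ l : List (Fin 2), l.count c + l.count c' = l.length := by
    intro l
    induction l with
    | nil => simp
    | cons a l ih =>
      rw [List.count_cons, List.count_cons, List.length_cons]
      rcases hall a with h | h <;> subst h <;> simp [hcc', Ne.symm hcc'] <;> omega
  -- regularity in integer form
  have hreg' : ∀ q : Fin 2, ∀ j, 1 ≤ j → j + 2 ≤ t →
      ((S.count q : ℤ) - b + 1 ≤ t * A q j ∧ (t:ℤ) * A q j ≤ (S.count q : ℤ) + b - 1) := by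
    intro q j h1 h2
    have hbR : (0:ℝ) < (b:ℝ) := by exact_mod_cast hb
    have htR : (0:ℝ) < (t:ℝ) := by
      have : (5:ℝ) ≤ (t:ℝ) := by exact_mod_cast ht
      linarith
    have hlen : j*b + 2*b ≤ S.length := by
      rw [hS]
      calc j*b + 2*b = (j+2)*b := by ring
      _ ≤ t*b := Nat.mul_le_mul_right b h2
    have hble : b ≤ j*b := by
      calc b = 1*b := by ring
      _ ≤ j*b := Nat.mul_le_mul_right b h1
    have H := hreg q (j*b) hble hlen
    have hlt : ((S.drop (j*b)).take b).length = b := by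
      rw [List.length_take, List.length_drop]
      omega
    have hcount : ((S.drop (j*b)).take b).count q = A q j :=
      (card_filter_eq_count S q (j*b) b (by omega)).symm
    rw [density, density, hlt, hcount, hS, hε, Nat.cast_mul] at H
    have h3 : (S.count q : ℝ)/((t:ℝ)*(b:ℝ)) - (A q j : ℝ)/(b:ℝ)
        = ((S.count q : ℝ) - (t:ℝ) * (A q j : ℝ))/((t:ℝ)*(b:ℝ)) := by
      field_simp
    rw [h3, abs_div, abs_of_pos (by positivity : (0:ℝ) < (t:ℝ)*(b:ℝ))] at H
    have key : |(S.count q : ℝ) - (t:ℝ) * (A q j : ℝ)| < (b:ℝ) := by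
      rw [div_lt_iff₀ (by positivity : (0:ℝ) < (t:ℝ)*(b:ℝ))] at H
      calc |(S.count q : ℝ) - (t:ℝ) * (A q j : ℝ)| < 1/(t:ℝ) * ((t:ℝ)*(b:ℝ)) := H
      _ = (b:ℝ) := by field_simp
    have keyZ : |(S.count q : ℤ) - (t:ℤ) * (A q j : ℤ)| < (b:ℤ) := by
      have hc : ((|(S.count q : ℤ) - (t:ℤ) * (A q j : ℤ)| : ℤ) : ℝ) < ((b:ℤ):ℝ) := by
        rw [Int.cast_abs]
        push_cast
        exact key
      exact_mod_cast hc
    rw [abs_lt] at keyZ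
    omega
  -- consecutive letters differ
  have lett_ne : ∀ k, lett (k+1) ≠ lett k := by
    intro k
    by_cases hk : Even k
    · have hk1 : ¬ Even (k+1) := by simp [Nat.even_add_one, hk]
      simp only [hlett, if_pos hk, if_neg hk1]
      exact Ne.symm hcc'
    · have hk1 : Even (k+1) := Nat.even_add_one.mpr hk
      simp only [hlett, if_pos hk1, if_neg hk]
      exact hcc'
  have hAB' : ∀ q q' : Fin 2, q ≠ q' → ∀ j, j + 1 ≤ t → A q j + A q' j = b := by
    intro q q' hqq' j hj
    rcases hall q with h | h <;> rcases hall q' with h' | h' <;> subst h <;> subst h'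
    · exact absurd rfl hqq'
    · exact hAB j hj
    · rw [Nat.add_comm]; exact hAB j hj
    · exact absurd rfl hqq'
  -- per-pair bound
  have pair_bd : ∀ k, k + 4 ≤ t →
      (t:ℤ) * A (lett k) (k+1) + t * A (lett k) (k+2) - (2*b-2) ≤ 2*t*(x k) := by
    intro k hk
    obtain ⟨u1, v1⟩ := hreg' (lett k) (k+1) (by omega) (by omega)
    obtain ⟨u2, v2⟩ := hreg' (lett k) (k+2) (by omega) (by omega)
    rcases le_total (A (lett k) (k+1)) (A (lett k) (k+2)) with h | h
    · have hxk : x k = A (lett k) (k+1) := min_eq_left h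
      rw [hxk]
      have : (A (lett k) (k+1) : ℤ) ≤ (A (lett k) (k+2) : ℤ) := by exact_mod_cast h
      linarith
    · have hxk : x k = A (lett k) (k+2) := min_eq_right h
      rw [hxk]
      have : (A (lett k) (k+2) : ℤ) ≤ (A (lett k) (k+1) : ℤ) := by exact_mod_cast h
      linarith
  -- chained induction
  have key : ∀ u, 1 ≤ u → u ≤ n →
      (t:ℤ) * A (lett 0) 1 + t * A (lett (u-1)) (u+1) + ((u:ℤ)-1) * (t*b) - (u:ℤ)*(2*b-2)
        ≤ ∑ k ∈ Finset.range u, 2*(t:ℤ)*(x k) := by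
    intro u hu
    induction u, hu using Nat.le_induction with
    | base =>
      intro _
      rw [Finset.sum_range_one]
      have hp := pair_bd 0 (by omega)
      norm_num
      linarith
    | succ u hu1 IH =>
      intro hsucc
      have IH' := IH (by omega)
      rw [Finset.sum_range_succ]
      have hp := pair_bd u (by omega)
      obtain ⟨w, rfl⟩ : ∃ w, u = w + 1 := ⟨u - 1, by omega⟩
      have hmerge : A (lett (w+1)) (w+2) + A (lett w) (w+2) = b :=
        hAB' _ _ (lett_ne w) (w+2) (by omega)
      have hmergeZ : (A (lett (w+1)) (w+2) : ℤ) + (A (lett w) (w+2) : ℤ) = (b:ℤ) := by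
        exact_mod_cast hmerge
      have hw : w + 1 - 1 = w := by omega
      rw [hw] at IH'
      have hw2 : w + 1 + 1 - 1 = w + 1 := by omega
      rw [hw2]
      have e1 : w + 1 + 1 = w + 2 := by omega
      have e2 : w + 1 + 2 = w + 3 := by omega
      have e3 : w + 1 + 1 + 1 = w + 3 := by omega
      rw [e1, e2] at hp
      rw [e1] at IH'
      rw [e3]
      push_cast
      push_cast at IH' hp hmergeZ
      have hTmul : (t:ℤ) * (A (lett (w+1)) (w+2) : ℤ) + (t:ℤ) * (A (lett w) (w+2) : ℤ)
          = (t:ℤ) * (b:ℤ) := by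
        rw [← mul_add, hmergeZ]
      linarith
  -- final integer bound
  have hnZ : (n:ℤ) = (t:ℤ) - 3 := by
    rw [hn, Nat.cast_sub (by omega : 3 ≤ t)]
    norm_num
  have hK := key n (by omega) le_rfl
  have e1 : (S.count c : ℤ) - b + 1 ≤ t * A (lett 0) 1 := by
    have h0 : lett 0 = c := by simp [hlett]
    rw [h0]
    exact (hreg' c 1 le_rfl (by omega)).1
  have e2 : (S.count (lett (n-1)) : ℤ) - b + 1 ≤ t * A (lett (n-1)) (n+1) :=
    (hreg' _ (n+1) (by omega) (by omega)).1
  have hcp : S.count c + S.count c' = t * b := by rw [count_pair S, hS]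
  have ecnt : (t:ℤ) * b ≤ (S.count c : ℤ) + (S.count (lett (n-1)) : ℤ) := by
    have h1 : t * b ≤ S.count c + S.count (lett (n-1)) := by
      rcases hall (lett (n-1)) with h | h <;> rw [h] <;> omega
    exact_mod_cast h1
  set L : ℤ := ∑ k ∈ Finset.range n, (x k : ℤ) with hL
  have hsumL : ∑ k ∈ Finset.range n, 2*(t:ℤ)*(x k) = 2*(t:ℤ)*L := by
    rw [hL, Finset.mul_sum]
  rw [hsumL] at hK
  have hmain : ((t:ℤ) - 5) * b ≤ 2 * L := by
    have htZ : (0:ℤ) < (t:ℤ) := by exact_mod_cast (by omega : 0 < t)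
    have hbig : (t:ℤ) * (((t:ℤ) - 5) * b) ≤ (t:ℤ) * (2 * L) := by
      nlinarith [hK, e1, e2, ecnt, hnZ]
    exact le_of_mul_le_mul_left hbig htZ
  -- construction of the twins
  have hx1 : ∀ k, x k ≤ A (lett k) (k+1) := fun k => min_le_left _ _
  have hx2 : ∀ k, x k ≤ A (lett k) (k+2) := fun k => min_le_right _ _
  choose P hPsub hPcard using fun k => Finset.exists_subset_card_eq (hx1 k)
  choose Q hQsub hQcard using fun k => Finset.exists_subset_card_eq (hx2 k)
  have memP : ∀ k i, i ∈ P k → (k+1)*b ≤ i ∧ i < (k+1)*b + b ∧ S[i]? = some (lett k) :=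
    fun k i hi => memPos _ _ _ (hPsub k hi)
  have memQ : ∀ k i, i ∈ Q k → (k+2)*b ≤ i ∧ i < (k+2)*b + b ∧ S[i]? = some (lett k) :=
    fun k i hi => memPos _ _ _ (hQsub k hi)
  have blk_eq : ∀ a d i : ℕ, a*b ≤ i → i < a*b + b → d*b ≤ i → i < d*b + b → a = d := by
    intro a d i h1 h2 h3 h4
    rcases lt_trichotomy a d with h | h | h
    · exfalso
      have h5 : a*b + b ≤ d*b := by
        calc a*b + b = (a+1)*b := by ring
        _ ≤ d*b := Nat.mul_le_mul_right b (by omega)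
      omega
    · exact h
    · exfalso
      have h5 : d*b + b ≤ a*b := by
        calc d*b + b = (d+1)*b := by ring
        _ ≤ a*b := Nat.mul_le_mul_right b (by omega)
      omega
  set I := (Finset.range n).biUnion P with hI
  set J := (Finset.range n).biUnion Q with hJ
  have hIsub : I ⊆ Finset.range S.length := by
    intro i hi
    obtain ⟨k, hk, hik⟩ := Finset.mem_biUnion.mp hi
    rw [Finset.mem_range] at hk
    obtain ⟨_, h2, _⟩ := memP k i hik
    rw [Finset.mem_range, hS]
    calc i < (k+1)*b + b := h2
    _ = (k+2)*b := by ring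
    _ ≤ t*b := Nat.mul_le_mul_right b (by omega)
  have hJsub : J ⊆ Finset.range S.length := by
    intro i hi
    obtain ⟨k, hk, hik⟩ := Finset.mem_biUnion.mp hi
    rw [Finset.mem_range] at hk
    obtain ⟨_, h2, _⟩ := memQ k i hik
    rw [Finset.mem_range, hS]
    calc i < (k+2)*b + b := h2
    _ = (k+3)*b := by ring
    _ ≤ t*b := Nat.mul_le_mul_right b (by omega)
  have hdisj : Disjoint I J := by
    rw [Finset.disjoint_left]
    intro i hiI hiJ
    obtain ⟨k, hk, hik⟩ := Finset.mem_biUnion.mp hiI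
    obtain ⟨k', hk', hik'⟩ := Finset.mem_biUnion.mp hiJ
    obtain ⟨p1, p2, p3⟩ := memP k i hik
    obtain ⟨q1, q2, q3⟩ := memQ k' i hik'
    have hkk : k + 1 = k' + 2 := blk_eq _ _ _ p1 p2 q1 q2
    have : k = k' + 1 := by omega
    subst this
    rw [p3] at q3
    exact lett_ne k' (Option.some_inj.mp q3)
  have hPdisj : ∀ k₁ ∈ Finset.range n, ∀ k₂ ∈ Finset.range n, k₁ ≠ k₂ →
      Disjoint (P k₁) (P k₂) := by
    intro k₁ _ k₂ _ hne
    rw [Finset.disjoint_left]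
    intro i h1 h2
    obtain ⟨p1, p2, _⟩ := memP k₁ i h1
    obtain ⟨q1, q2, _⟩ := memP k₂ i h2
    have he := blk_eq _ _ _ p1 p2 q1 q2
    exact hne (by omega)
  have hQdisj : ∀ k₁ ∈ Finset.range n, ∀ k₂ ∈ Finset.range n, k₁ ≠ k₂ →
      Disjoint (Q k₁) (Q k₂) := by
    intro k₁ _ k₂ _ hne
    rw [Finset.disjoint_left]
    intro i h1 h2
    obtain ⟨p1, p2, _⟩ := memQ k₁ i h1
    obtain ⟨q1, q2, _⟩ := memQ k₂ i h2
    have he := blk_eq _ _ _ p1 p2 q1 q2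
    exact hne (by omega)
  have hIcard : I.card = ∑ k ∈ Finset.range n, x k := by
    rw [hI, Finset.card_biUnion hPdisj]
    exact Finset.sum_congr rfl (fun k _ => hPcard k)
  have hJcard : J.card = ∑ k ∈ Finset.range n, x k := by
    rw [hJ, Finset.card_biUnion hQdisj]
    exact Finset.sum_congr rfl (fun k _ => hQcard k)
  -- extract equality
  have hext : ∀ u, extract S ((Finset.range u).biUnion P)
      = extract S ((Finset.range u).biUnion Q) := by
    intro u
    induction u with
    | zero => simp [extract]
    | succ u ih =>
      have hsepP : ∀ i ∈ (Finset.range u).biUnion P, ∀ j ∈ P u, i < j := by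
        intro i hi j hj
        obtain ⟨k, hk, hik⟩ := Finset.mem_biUnion.mp hi
        rw [Finset.mem_range] at hk
        obtain ⟨_, h2, _⟩ := memP k i hik
        obtain ⟨h3, _, _⟩ := memP u j hj
        calc i < (k+1)*b + b := h2
        _ = (k+2)*b := by ring
        _ ≤ (u+1)*b := Nat.mul_le_mul_right b (by omega)
        _ ≤ j := h3
      have hsepQ : ∀ i ∈ (Finset.range u).biUnion Q, ∀ j ∈ Q u, i < j := by
        intro i hi j hj
        obtain ⟨k, hk, hik⟩ := Finset.mem_biUnion.mp hi
        rw [Finset.mem_range] at hk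
        obtain ⟨_, h2, _⟩ := memQ k i hik
        obtain ⟨h3, _, _⟩ := memQ u j hj
        calc i < (k+2)*b + b := h2
        _ = (k+3)*b := by ring
        _ ≤ (u+2)*b := Nat.mul_le_mul_right b (by omega)
        _ ≤ j := h3
      rw [Finset.range_add_one, Finset.biUnion_insert, Finset.union_comm,
        extract_union S hsepP, Finset.biUnion_insert (s := Finset.range u) (t := Q),
        Finset.union_comm, extract_union S hsepQ, ih,
        extract_const S (P u) (lett u) (fun i hi => (memP u i hi).2.2),
        extract_const S (Q u) (lett u) (fun i hi => (memQ u i hi).2.2),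
        hPcard, hQcard]
  refine ⟨∑ k ∈ Finset.range n, x k, ⟨I, J, hIsub, hJsub, hdisj, hIcard, hJcard, hext n⟩, ?_⟩
  -- final numeric conclusion
  have hcast : ((∑ k ∈ Finset.range n, x k : ℕ) : ℝ) = ((L : ℤ) : ℝ) := by
    rw [hL]
    push_cast
    rfl
  have hmainR : ((t:ℝ) - 5) * (b:ℝ) ≤ 2 * ((∑ k ∈ Finset.range n, x k : ℕ) : ℝ) := by
    rw [hcast]
    exact_mod_cast hmain
  rw [hε, hS]
  have htR : (0:ℝ) < (t:ℝ) := by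
    have : (5:ℝ) ≤ (t:ℝ) := by exact_mod_cast ht
    linarith
  have hlhs : (1 - 5 * (1/(t:ℝ))) * ((t*b : ℕ) : ℝ) = ((t:ℝ) - 5) * (b:ℝ) := by
    push_cast
    field_simp
  rw [hlhs]
  exact hmainR
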